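/- Let (X,𝒳) be a measurable space, let (Y,𝒴,ν) be a finite measure space with ν(Y) = 1, and let ρ: X×Y → [0,∞] be a measurable distortion function. Let k ∈ (0,∞), suppose ν is ρ^{1/k}-superregular of dimension m ∈ (0,∞) with superregularity constants b ∈ (0,∞) and δ₀ ∈ (0,∞], and assume sup_{x∈X,y∈Y} ρ(x,y)^{1/k} < ∞ whenever δ₀ < ∞. Then every random variable X taking values in (X,𝒳) satisfies: (i) the upper k-th quantization dimension satisfies limsup_{n→∞} k·log(n)/log(1/V_n(X)) ≤ m; and (ii) if the k-th quantization dimension D_k(X) exists and equals m, then the upper k-th quantization coefficient satisfies limsup_{n→∞} n^{k/m}·V_n(X) ≤ Γ(1+k/m)·b^{-k/m}. -/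

import Mathlib

open MeasureTheory Filter
open scoped ENNReal Classical

/-- The `n`-th quantization error `V_n(X) = inf_f E[ρ(X, f(X))]`, the infimum being over
all measurable maps `f : X → Y` whose range contains at most `n` points. -/
noncomputable def quantErr {X Y : Type*} [MeasurableSpace X] [MeasurableSpace Y]
    (μX : Measure X) (ρ : X → Y → ℝ≥0∞) (n : ℕ) : ℝ≥0∞ :=
  ⨅ (f : X → Y)
    (_ : Measurable f ∧ ∃ s : Finset Y, s.card ≤ n ∧ ∀ x, f x ∈ s),
    ∫⁻ x, ρ x (f x) ∂μX

/-- The quantity `k·log n / log(1/V_n(X))`, whose `liminf`/`limsup` as `n → ∞` are the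
lower/upper `k`-th quantization dimensions. -/
noncomputable def qRatio {X Y : Type*} [MeasurableSpace X] [MeasurableSpace Y]
    (μX : Measure X) (ρ : X → Y → ℝ≥0∞) (k : ℝ) (n : ℕ) : ℝ :=
  k * Real.log n / Real.log (1 / (quantErr μX ρ n).toReal)

section Aux
open Set Real Topology

lemma aux_integrableOn_exp_neg_mul_rpow {p B : ℝ} (hp : 0 < p) (hB : 0 < B) :
    IntegrableOn (fun t : ℝ => Real.exp (-B * t ^ p)) (Set.Ioi 0) := by
  have h1 : IntegrableOn (fun y : ℝ => y ^ (1/p - 1) * Real.exp (-B * y ^ (1:ℝ)))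
      (Set.Ioi 0) := by
    refine integrableOn_rpow_mul_exp_neg_mul_rpow ?_ one_pos hB
    have := one_div_pos.mpr hp
    linarith
  simp_rw [Real.rpow_one] at h1
  have h2 := (integrableOn_Ioi_comp_rpow_iff'
      (fun y => y ^ (1/p - 1) * Real.exp (-B * y)) (ne_of_gt hp)).mpr h1
  refine h2.congr_fun (fun x hx => ?_) measurableSet_Ioi
  have hx0 : (0:ℝ) < x := hx
  have : (x ^ p) ^ (1/p - 1) = x ^ (p * (1/p - 1)) := (Real.rpow_mul hx0.le _ _).symm
  simp only [smul_eq_mul]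
  rw [this, ← mul_assoc, ← Real.rpow_add hx0]
  have : p - 1 + p * (1/p - 1) = 0 := by field_simp; ring
  rw [this, Real.rpow_zero, one_mul]

lemma aux_lintegral_exp_neg_mul_rpow {p B : ℝ} (hp : 0 < p) (hB : 0 < B) :
    ∫⁻ t in Set.Ioi (0:ℝ), ENNReal.ofReal (Real.exp (-B * t ^ p)) =
      ENNReal.ofReal (B ^ (-1/p) * Real.Gamma (1/p + 1)) := by
  rw [← MeasureTheory.ofReal_integral_eq_lintegral_ofReal
      (aux_integrableOn_exp_neg_mul_rpow hp hB)
      (Filter.Eventually.of_forall fun x => Real.exp_nonneg _),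
    integral_exp_neg_mul_rpow hp hB]

lemma aux_layercake {α : Type*} [MeasurableSpace α] (μ : Measure α) [SFinite μ]
    {g : α → ℝ≥0∞} (hg : Measurable g) :
    ∫⁻ a, g a ∂μ = ∫⁻ t in Set.Ioi (0:ℝ), μ {a | ENNReal.ofReal t < g a} := by
  set F : α → ℝ → ℝ≥0∞ := fun a t => if ENNReal.ofReal t < g a then (1:ℝ≥0∞) else 0 with hF
  have hFm : Measurable (Function.uncurry F) := by
    refine Measurable.ite ?_ measurable_const measurable_const
    exact measurableSet_lt (ENNReal.measurable_ofReal.comp measurable_snd)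
      (hg.comp measurable_fst)
  have step1 : ∀ a, ∫⁻ t in Set.Ioi (0:ℝ),
      (if ENNReal.ofReal t < g a then (1:ℝ≥0∞) else 0) = g a := by
    intro a
    have hset : MeasurableSet {t : ℝ | ENNReal.ofReal t < g a} :=
      measurableSet_lt ENNReal.measurable_ofReal measurable_const
    have : ∫⁻ t in Set.Ioi (0:ℝ), (if ENNReal.ofReal t < g a then (1:ℝ≥0∞) else 0)
        = (volume.restrict (Set.Ioi (0:ℝ))) {t : ℝ | ENNReal.ofReal t < g a} := by
      rw [← lintegral_indicator_one hset]
      refine lintegral_congr fun t => ?_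
      simp [Set.indicator_apply]
    rw [this, Measure.restrict_apply hset]
    rcases eq_or_ne (g a) ∞ with h | h
    · simp only [h]
      have : {t : ℝ | ENNReal.ofReal t < ∞} = Set.univ := by
        ext t; simp [ENNReal.ofReal_lt_top]
      rw [this, Set.univ_inter]
      simp
    · rcases eq_or_ne (g a) 0 with h0 | h0
      · have : {t : ℝ | ENNReal.ofReal t < g a} ∩ Set.Ioi 0 = ∅ := by
          ext t; simp [h0]
        rw [this]; simp [h0]
      · have hpos : 0 < (g a).toReal := ENNReal.toReal_pos h0 h
        have : {t : ℝ | ENNReal.ofReal t < g a} ∩ Set.Ioi 0 = Set.Ioo 0 (g a).toReal := by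
          ext t
          simp only [Set.mem_inter_iff, Set.mem_setOf_eq, Set.mem_Ioi, Set.mem_Ioo]
          constructor
          · rintro ⟨h1, h2⟩
            exact ⟨h2, (ENNReal.ofReal_lt_iff_lt_toReal h2.le h).mp h1⟩
          · rintro ⟨h1, h2⟩
            exact ⟨(ENNReal.ofReal_lt_iff_lt_toReal h1.le h).mpr h2, h1⟩
        rw [this, Real.volume_Ioo, sub_zero, ENNReal.ofReal_toReal h]
  calc ∫⁻ a, g a ∂μ
      = ∫⁻ a, (∫⁻ t in Set.Ioi (0:ℝ),
          (if ENNReal.ofReal t < g a then (1:ℝ≥0∞) else 0)) ∂μ := by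
        refine lintegral_congr fun a => (step1 a).symm
    _ = ∫⁻ t in Set.Ioi (0:ℝ), (∫⁻ a,
          (if ENNReal.ofReal t < g a then (1:ℝ≥0∞) else 0) ∂μ) := by
        exact lintegral_lintegral_swap (μ := μ) (ν := volume.restrict (Set.Ioi 0))
          (f := F) hFm.aemeasurable
    _ = ∫⁻ t in Set.Ioi (0:ℝ), μ {a | ENNReal.ofReal t < g a} := by
        refine lintegral_congr fun t => ?_
        have hset : MeasurableSet {a | ENNReal.ofReal t < g a} :=
          hg measurableSet_Ioi
        rw [← lintegral_indicator_one hset]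
        refine lintegral_congr fun a => ?_
        simp [Set.indicator_apply]

lemma key_bound
    {X Y : Type*} [MeasurableSpace X] [MeasurableSpace Y]
    (ν : Measure Y) [IsProbabilityMeasure ν]
    (ρ : X → Y → ℝ≥0∞) (hρ : Measurable (Function.uncurry ρ))
    (k m b : ℝ) (δ₀ : ℝ≥0∞) (hk : 0 < k) (hm : 0 < m) (hb : 0 < b) (hδ₀ : 0 < δ₀)
    (hsup : ∀ x : X, ∀ t : ℝ, 0 < t → ENNReal.ofReal t < δ₀ →
      ENNReal.ofReal (b * t ^ m) ≤ ν {y | (ρ x y) ^ (1 / k) < ENNReal.ofReal t})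
    (hβ : δ₀ < ∞ → (⨆ x : X, ⨆ y : Y, (ρ x y) ^ (1 / k)) < ∞)
    (μX : Measure X) [IsProbabilityMeasure μX] :
    ∃ D : ℝ≥0∞, D ≠ ∞ ∧ ∃ θ : ℝ, 0 ≤ θ ∧ θ < 1 ∧ ∀ n : ℕ, 1 ≤ n →
      quantErr μX ρ n ≤
        ENNReal.ofReal (Real.Gamma (1 + k/m) * b ^ (-(k/m)) * (n:ℝ) ^ (-(k/m)))
          + D * ENNReal.ofReal (θ ^ n) := by
  have hX : Nonempty X := by
    by_contra hne
    rw [not_nonempty_iff] at hne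
    have h1 : (μX Set.univ) = 1 := measure_univ
    rw [Set.univ_eq_empty_iff.mpr hne, measure_empty] at h1
    exact zero_ne_one h1
  set p : ℝ := m / k with hpdef
  have hp : 0 < p := div_pos hm hk
  -- choose δ₁
  obtain ⟨δ₁, hδ₁pos, hδ₁lt⟩ : ∃ δ₁ : ℝ, 0 < δ₁ ∧ ENNReal.ofReal δ₁ < δ₀ := by
    rcases eq_or_ne δ₀ ∞ with h | h
    · exact ⟨1, one_pos, by simp [h]⟩
    · have ht : 0 < δ₀.toReal := ENNReal.toReal_pos hδ₀.ne' h
      refine ⟨δ₀.toReal / 2, by positivity, ?_⟩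
      rw [ENNReal.ofReal_lt_iff_lt_toReal (by positivity) h]
      linarith
  set c : ℝ := b * δ₁ ^ m with hcdef
  have hc0 : 0 < c := by positivity
  have hc1 : c ≤ 1 := by
    have h2 := (hsup (Classical.arbitrary X) δ₁ hδ₁pos hδ₁lt).trans prob_le_one
    exact ENNReal.ofReal_le_one.mp h2
  set θ : ℝ := 1 - c with hθdef
  have hθ0 : 0 ≤ θ := by simp [hθdef]; linarith
  have hθ1 : θ < 1 := by simp [hθdef]; linarith
  set β : ℝ≥0∞ := ⨆ x : X, ⨆ y : Y, (ρ x y) ^ (1 / k) with hβdef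
  set T : ℝ := max (δ₁ ^ k) ((β ^ k).toReal) with hTdef
  refine ⟨if δ₀ = ∞ then 0 else ENNReal.ofReal T, by split <;> simp, θ, hθ0, hθ1, ?_⟩
  intro n hn
  set D : ℝ≥0∞ := if δ₀ = ∞ then 0 else ENNReal.ofReal T with hDdef
  haveI : NeZero n := ⟨Nat.one_le_iff_ne_zero.mp hn⟩
  haveI : Nonempty (Fin n) := ⟨⟨0, hn⟩⟩
  set P : Measure (Fin n → Y) := Measure.pi (fun _ => ν) with hPdef
  haveI : IsProbabilityMeasure P := by rw [hPdef]; infer_instance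
  set E : ℝ≥0∞ := ENNReal.ofReal (((n:ℝ) * b) ^ (-1/p) * Real.Gamma (1/p + 1)) with hEdef
  have hnb : 0 < (n:ℝ) * b := by
    have : (0:ℝ) < n := by exact_mod_cast hn
    positivity
  -- the rho-slice facts, for fixed x
  have hρx : ∀ x : X, Measurable (ρ x) := fun x =>
    hρ.comp (measurable_const.prodMk measurable_id)
  have hcompl : ∀ (x : X) (t : ℝ),
      ν {y | ENNReal.ofReal t < ρ x y} ≤ 1 - ν {y | ρ x y < ENNReal.ofReal t} := by
    intro x t
    have hsub : {y | ENNReal.ofReal t < ρ x y} ⊆ {y | ρ x y < ENNReal.ofReal t}ᶜ := by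
      intro y hy
      simp only [Set.mem_compl_iff, Set.mem_setOf_eq, not_lt]
      exact le_of_lt hy
    calc ν {y | ENNReal.ofReal t < ρ x y} ≤ ν ({y | ρ x y < ENNReal.ofReal t}ᶜ) :=
          measure_mono hsub
      _ = 1 - ν {y | ρ x y < ENNReal.ofReal t} :=
          prob_compl_eq_one_sub (hρx x measurableSet_Iio)
  have hone_sub : ∀ u : ℝ, 0 ≤ u → (1 : ℝ≥0∞) - ENNReal.ofReal u = ENNReal.ofReal (1 - u) := by
    intro u hu
    rw [ENNReal.ofReal_sub _ hu, ENNReal.ofReal_one]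
  have hsmall : ∀ (x : X) (t : ℝ), 0 < t → ENNReal.ofReal (t ^ (1/k)) < δ₀ →
      ν {y | ENNReal.ofReal t < ρ x y} ≤ ENNReal.ofReal (Real.exp (-(b * t ^ p))) := by
    intro x t ht hlt
    have h1 := hsup x (t ^ (1/k)) (Real.rpow_pos_of_pos ht _) hlt
    have hseteq : {y | (ρ x y) ^ (1/k) < ENNReal.ofReal (t ^ (1/k))}
        = {y | ρ x y < ENNReal.ofReal t} := by
      ext y
      simp only [Set.mem_setOf_eq]
      rw [← ENNReal.ofReal_rpow_of_pos ht]
      exact ENNReal.rpow_lt_rpow_iff (one_div_pos.mpr hk)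
    rw [hseteq] at h1
    have h2 : b * (t ^ (1/k)) ^ m = b * t ^ p := by
      rw [← Real.rpow_mul ht.le]
      congr 1
      rw [hpdef]
      field_simp
    rw [h2] at h1
    calc ν {y | ENNReal.ofReal t < ρ x y}
        ≤ 1 - ν {y | ρ x y < ENNReal.ofReal t} := hcompl x t
      _ ≤ 1 - ENNReal.ofReal (b * t ^ p) := tsub_le_tsub_left h1 1
      _ = ENNReal.ofReal (1 - b * t ^ p) := hone_sub _ (by positivity)
      _ ≤ ENNReal.ofReal (Real.exp (-(b * t ^ p))) := by
          apply ENNReal.ofReal_le_ofReal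
          have := Real.add_one_le_exp (-(b * t ^ p))
          linarith
  have hmid : ∀ (x : X) (t : ℝ), δ₁ ^ k ≤ t →
      ν {y | ENNReal.ofReal t < ρ x y} ≤ ENNReal.ofReal θ := by
    intro x t ht
    have hsubset : {y | (ρ x y) ^ (1/k) < ENNReal.ofReal δ₁}
        ⊆ {y | ρ x y < ENNReal.ofReal t} := by
      intro y hy
      simp only [Set.mem_setOf_eq] at hy ⊢
      have h2 : ((ρ x y) ^ (1/k)) ^ k < (ENNReal.ofReal δ₁) ^ k :=
        ENNReal.rpow_lt_rpow hy hk
      rw [← ENNReal.rpow_mul, one_div, inv_mul_cancel₀ hk.ne', ENNReal.rpow_one] at h2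
      calc ρ x y < (ENNReal.ofReal δ₁) ^ k := h2
        _ = ENNReal.ofReal (δ₁ ^ k) := ENNReal.ofReal_rpow_of_pos hδ₁pos
        _ ≤ ENNReal.ofReal t := ENNReal.ofReal_le_ofReal ht
    have h3 : ENNReal.ofReal c ≤ ν {y | ρ x y < ENNReal.ofReal t} :=
      (hsup x δ₁ hδ₁pos hδ₁lt).trans (measure_mono hsubset)
    calc ν {y | ENNReal.ofReal t < ρ x y}
        ≤ 1 - ν {y | ρ x y < ENNReal.ofReal t} := hcompl x t
      _ ≤ 1 - ENNReal.ofReal c := tsub_le_tsub_left h3 1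
      _ = ENNReal.ofReal θ := hone_sub _ hc0.le
  have hρ_le_βk : ∀ (x : X) (y : Y), ρ x y ≤ β ^ k := by
    intro x y
    have h1 : (ρ x y) ^ (1/k) ≤ β := le_iSup_of_le x (le_iSup_of_le y le_rfl)
    have h2 := ENNReal.rpow_le_rpow h1 hk.le
    rwa [← ENNReal.rpow_mul, one_div, inv_mul_cancel₀ hk.ne', ENNReal.rpow_one] at h2
  -- measurability of slice functions
  have hGm : Measurable (Function.uncurry (fun (ys : Fin n → Y) (x : X) => ⨅ i, ρ x (ys i))) := by
    apply Measurable.iInf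
    intro i
    exact hρ.comp (measurable_snd.prodMk ((measurable_pi_apply i).comp measurable_fst))
  have hgm : ∀ x : X, Measurable (fun ys : Fin n → Y => ⨅ i, ρ x (ys i)) := by
    intro x; apply Measurable.iInf; intro i
    exact hρ.comp (measurable_const.prodMk (measurable_pi_apply i))
  -- survival function identity
  have hsurv : ∀ (x : X) (t : ℝ), P {ys | ENNReal.ofReal t < ⨅ i, ρ x (ys i)}
      = (ν {y | ENNReal.ofReal t < ρ x y}) ^ n := by
    intro x t
    have hset : {ys : Fin n → Y | ENNReal.ofReal t < ⨅ i, ρ x (ys i)}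
        = Set.pi Set.univ (fun _ : Fin n => {y | ENNReal.ofReal t < ρ x y}) := by
      ext ys
      simp only [Set.mem_setOf_eq, Set.mem_pi, Set.mem_univ, forall_true_left]
      constructor
      · intro h i
        exact lt_of_lt_of_le h (iInf_le _ i)
      · intro h
        obtain ⟨i₀, hi₀⟩ := Finite.exists_min (fun i : Fin n => ρ x (ys i))
        have : ⨅ i, ρ x (ys i) = ρ x (ys i₀) := le_antisymm (iInf_le _ i₀) (le_iInf hi₀)
        rw [this]
        exact h i₀
    rw [hset, hPdef, Measure.pi_pi]
    simp
  -- the inner (per x) bound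
  have hinner : ∀ x : X, ∫⁻ ys, (⨅ i, ρ x (ys i)) ∂P ≤ E + D * ENNReal.ofReal (θ ^ n) := by
    intro x
    have hPexp : ∀ t : ℝ, 0 < t → ENNReal.ofReal (t ^ (1/k)) < δ₀ →
        P {ys | ENNReal.ofReal t < ⨅ i, ρ x (ys i)}
          ≤ ENNReal.ofReal (Real.exp (-((n:ℝ) * b) * t ^ p)) := by
      intro t ht hlt
      rw [hsurv x t]
      calc (ν {y | ENNReal.ofReal t < ρ x y}) ^ n
          ≤ (ENNReal.ofReal (Real.exp (-(b * t ^ p)))) ^ n :=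
            pow_le_pow_left' (hsmall x t ht hlt) n
        _ = ENNReal.ofReal (Real.exp (-((n:ℝ) * b) * t ^ p)) := by
            rw [← ENNReal.ofReal_pow (Real.exp_nonneg _), ← Real.exp_nat_mul]
            congr 1; ring
    rw [aux_layercake P (hgm x)]
    rcases eq_or_ne δ₀ ∞ with hdinf | hfin
    · calc ∫⁻ t in Set.Ioi (0:ℝ), P {ys | ENNReal.ofReal t < ⨅ i, ρ x (ys i)}
          ≤ ∫⁻ t in Set.Ioi (0:ℝ), ENNReal.ofReal (Real.exp (-((n:ℝ) * b) * t ^ p)) := by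
            refine setLIntegral_mono' measurableSet_Ioi fun t ht => ?_
            exact hPexp t ht (by rw [hdinf]; exact ENNReal.ofReal_lt_top)
        _ = E := aux_lintegral_exp_neg_mul_rpow hp hnb
        _ ≤ E + D * ENNReal.ofReal (θ ^ n) := le_self_add
    · have hβfin : β ^ k ≠ ∞ :=
        ENNReal.rpow_ne_top_of_nonneg hk.le (hβ (lt_top_iff_ne_top.mpr hfin)).ne
      have hτT : δ₁ ^ k ≤ T := le_max_left _ _
      have hτpos : (0:ℝ) < δ₁ ^ k := Real.rpow_pos_of_pos hδ₁pos k
      have hDval : D = ENNReal.ofReal T := if_neg hfin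
      have hsplit1 : Set.Ioi (0:ℝ) = Set.Ioc 0 (δ₁ ^ k) ∪ Set.Ioi (δ₁ ^ k) :=
        (Set.Ioc_union_Ioi_eq_Ioi hτpos.le).symm
      rw [hsplit1, lintegral_union measurableSet_Ioi Set.Ioc_disjoint_Ioi_same]
      have hpiece1 : ∫⁻ t in Set.Ioc (0:ℝ) (δ₁ ^ k),
          P {ys | ENNReal.ofReal t < ⨅ i, ρ x (ys i)} ≤ E := by
        calc ∫⁻ t in Set.Ioc (0:ℝ) (δ₁ ^ k), P {ys | ENNReal.ofReal t < ⨅ i, ρ x (ys i)}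
            ≤ ∫⁻ t in Set.Ioc (0:ℝ) (δ₁ ^ k),
                ENNReal.ofReal (Real.exp (-((n:ℝ) * b) * t ^ p)) := by
              refine setLIntegral_mono' measurableSet_Ioc fun t ht => ?_
              refine hPexp t ht.1 ?_
              have h1 : t ^ (1/k) ≤ δ₁ := by
                have h2 : t ^ (1/k) ≤ (δ₁ ^ k) ^ (1/k) :=
                  Real.rpow_le_rpow ht.1.le ht.2 (one_div_pos.mpr hk).le
                rwa [← Real.rpow_mul hδ₁pos.le, mul_one_div_cancel hk.ne',
                  Real.rpow_one] at h2
              exact lt_of_le_of_lt (ENNReal.ofReal_le_ofReal h1) hδ₁lt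
          _ ≤ ∫⁻ t in Set.Ioi (0:ℝ),
                ENNReal.ofReal (Real.exp (-((n:ℝ) * b) * t ^ p)) :=
              lintegral_mono_set fun t ht => ht.1
          _ = E := aux_lintegral_exp_neg_mul_rpow hp hnb
      have hpiece2 : ∫⁻ t in Set.Ioi (δ₁ ^ k),
          P {ys | ENNReal.ofReal t < ⨅ i, ρ x (ys i)} ≤ D * ENNReal.ofReal (θ ^ n) := by
        rw [← Set.Ioc_union_Ioi_eq_Ioi hτT,
          lintegral_union measurableSet_Ioi Set.Ioc_disjoint_Ioi_same]
        have ha : ∫⁻ t in Set.Ioc (δ₁ ^ k) T,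
            P {ys | ENNReal.ofReal t < ⨅ i, ρ x (ys i)} ≤ D * ENNReal.ofReal (θ ^ n) := by
          calc ∫⁻ t in Set.Ioc (δ₁ ^ k) T, P {ys | ENNReal.ofReal t < ⨅ i, ρ x (ys i)}
              ≤ ∫⁻ _ in Set.Ioc (δ₁ ^ k) T, ENNReal.ofReal (θ ^ n) := by
                refine setLIntegral_mono' measurableSet_Ioc fun t ht => ?_
                rw [hsurv x t]
                calc (ν {y | ENNReal.ofReal t < ρ x y}) ^ n
                    ≤ (ENNReal.ofReal θ) ^ n := pow_le_pow_left' (hmid x t ht.1.le) n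
                  _ = ENNReal.ofReal (θ ^ n) := (ENNReal.ofReal_pow hθ0 n).symm
            _ = ENNReal.ofReal (θ ^ n) * volume (Set.Ioc (δ₁ ^ k) T) :=
                setLIntegral_const _ _
            _ ≤ ENNReal.ofReal (θ ^ n) * ENNReal.ofReal T := by
                gcongr
                rw [Real.volume_Ioc]
                exact ENNReal.ofReal_le_ofReal (by linarith)
            _ = D * ENNReal.ofReal (θ ^ n) := by rw [hDval, mul_comm]
        have hb' : ∫⁻ t in Set.Ioi T,
            P {ys | ENNReal.ofReal t < ⨅ i, ρ x (ys i)} = 0 := by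
          have hle : ∫⁻ t in Set.Ioi T, P {ys | ENNReal.ofReal t < ⨅ i, ρ x (ys i)}
              ≤ ∫⁻ _ in Set.Ioi T, (0:ℝ≥0∞) := by
            refine setLIntegral_mono' measurableSet_Ioi fun t ht => ?_
            have hempty : {ys : Fin n → Y | ENNReal.ofReal t < ⨅ i, ρ x (ys i)} = ∅ := by
              ext ys
              simp only [Set.mem_setOf_eq, Set.mem_empty_iff_false, iff_false, not_lt]
              refine le_trans (iInf_le _ ⟨0, hn⟩) ?_
              refine le_trans (hρ_le_βk x _) ?_
              calc β ^ k = ENNReal.ofReal ((β ^ k).toReal) :=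
                    (ENNReal.ofReal_toReal hβfin).symm
                _ ≤ ENNReal.ofReal t := by
                    refine ENNReal.ofReal_le_ofReal ?_
                    have := le_max_right (δ₁ ^ k) ((β ^ k).toReal)
                    have ht' : T < t := ht
                    linarith
            rw [hempty, measure_empty]
          simpa using hle
        rw [hb']
        simpa using ha
      exact add_le_add hpiece1 hpiece2
  -- Fubini and selection of good codebook
  have hswap : ∫⁻ ys, (∫⁻ x, ⨅ i, ρ x (ys i) ∂μX) ∂P
      = ∫⁻ x, (∫⁻ ys, ⨅ i, ρ x (ys i) ∂P) ∂μX :=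
    lintegral_lintegral_swap hGm.aemeasurable
  have htot : ∫⁻ ys, (∫⁻ x, ⨅ i, ρ x (ys i) ∂μX) ∂P ≤ E + D * ENNReal.ofReal (θ ^ n) := by
    rw [hswap]
    calc ∫⁻ x, (∫⁻ ys, ⨅ i, ρ x (ys i) ∂P) ∂μX
        ≤ ∫⁻ _, (E + D * ENNReal.ofReal (θ ^ n)) ∂μX := lintegral_mono fun x => hinner x
      _ = E + D * ENNReal.ofReal (θ ^ n) := by rw [lintegral_const, measure_univ, mul_one]
  obtain ⟨ys, hys⟩ := exists_le_lintegral (μ := P)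
    (f := fun ys : Fin n → Y => ∫⁻ x, ⨅ i, ρ x (ys i) ∂μX)
    (Measurable.aemeasurable (Measurable.lintegral_prod_right' hGm))
  -- measurable selection of a nearest point
  have hAmeas : ∀ i : Fin n, MeasurableSet {x : X | ρ x (ys i) = ⨅ j, ρ x (ys j)} := by
    intro i
    have h1 : Measurable fun x : X => ρ x (ys i) :=
      hρ.comp (measurable_id.prodMk measurable_const)
    have h2 : Measurable fun x : X => ⨅ j, ρ x (ys j) := by
      apply Measurable.iInf; intro j
      exact hρ.comp (measurable_id.prodMk measurable_const)
    have : {x : X | ρ x (ys i) = ⨅ j, ρ x (ys j)}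
        = {x : X | ρ x (ys i) ≤ ⨅ j, ρ x (ys j)} ∩ {x : X | ⨅ j, ρ x (ys j) ≤ ρ x (ys i)} := by
      ext x; simp only [Set.mem_setOf_eq, Set.mem_inter_iff]
      exact ⟨fun h => ⟨h.le, h.ge⟩, fun h => le_antisymm h.1 h.2⟩
    rw [this]
    exact (measurableSet_le h1 h2).inter (measurableSet_le h2 h1)
  have hfinmin : ∀ x : X, (Finset.univ.filter
      (fun i : Fin n => ρ x (ys i) = ⨅ j, ρ x (ys j))).Nonempty := by
    intro x
    obtain ⟨i, hi⟩ := Finite.exists_min (fun i : Fin n => ρ x (ys i))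
    exact ⟨i, Finset.mem_filter.mpr ⟨Finset.mem_univ i,
      le_antisymm (le_iInf hi) (iInf_le _ i)⟩⟩
  set sel : X → Fin n := fun x => (Finset.univ.filter
      (fun i : Fin n => ρ x (ys i) = ⨅ j, ρ x (ys j))).min' (hfinmin x) with hseldef
  have hsel_eq : ∀ x : X, ρ x (ys (sel x)) = ⨅ j, ρ x (ys j) := by
    intro x
    have := Finset.min'_mem _ (hfinmin x)
    rw [Finset.mem_filter] at this
    exact this.2
  have hselm : Measurable sel := by
    apply measurable_to_countable'
    intro i
    have hpre : sel ⁻¹' {i} = {x : X | ρ x (ys i) = ⨅ j, ρ x (ys j)}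
        ∩ ⋂ (j : Fin n), ⋂ (_ : j < i), {x : X | ρ x (ys j) = ⨅ j', ρ x (ys j')}ᶜ := by
      ext x
      simp only [Set.mem_preimage, Set.mem_singleton_iff, Set.mem_inter_iff,
        Set.mem_iInter, Set.mem_compl_iff, Set.mem_setOf_eq]
      constructor
      · intro hx
        constructor
        · rw [← hx]; exact hsel_eq x
        · intro j hj hcond
          have hle : sel x ≤ j := Finset.min'_le _ _ (by simp [hcond])
          rw [hx] at hle
          exact absurd hj (not_lt.mpr hle)
      · rintro ⟨h1, h2⟩
        refine le_antisymm (Finset.min'_le _ _ (by simp [h1])) ?_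
        by_contra hlt
        push_neg at hlt
        have hmem := Finset.min'_mem _ (hfinmin x)
        rw [Finset.mem_filter] at hmem
        exact h2 (sel x) hlt hmem.2
    rw [hpre]
    exact (hAmeas i).inter
      (MeasurableSet.iInter fun j => MeasurableSet.iInter fun _ => (hAmeas j).compl)
  have hquant : quantErr μX ρ n ≤ ∫⁻ x, ⨅ i, ρ x (ys i) ∂μX := by
    have hf : Measurable (fun x => ys (sel x)) :=
      (measurable_of_countable ys).comp hselm
    have hcard : (Finset.univ.image ys).card ≤ n := by
      refine le_trans Finset.card_image_le ?_
      simp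
    refine le_trans (iInf_le _ (fun x => ys (sel x))) ?_
    refine le_trans (iInf_le _ ⟨hf, Finset.univ.image ys, hcard,
      fun x => Finset.mem_image_of_mem _ (Finset.mem_univ _)⟩) ?_
    refine le_of_eq (lintegral_congr fun x => ?_)
    exact hsel_eq x
  -- final constant conversion
  have hconst : ((n:ℝ) * b) ^ (-1/p) * Real.Gamma (1/p + 1)
      = Real.Gamma (1 + k/m) * b ^ (-(k/m)) * (n:ℝ) ^ (-(k/m)) := by
    have h1 : -1/p = -(k/m) := by rw [hpdef]; field_simp
    have h2 : 1/p = k/m := by rw [hpdef, one_div_div]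
    rw [h1, h2, Real.mul_rpow (Nat.cast_nonneg n) hb.le, add_comm]
    ring
  calc quantErr μX ρ n ≤ ∫⁻ x, ⨅ i, ρ x (ys i) ∂μX := hquant
    _ ≤ E + D * ENNReal.ofReal (θ ^ n) := le_trans hys htot
    _ = ENNReal.ofReal (Real.Gamma (1 + k/m) * b ^ (-(k/m)) * (n:ℝ) ^ (-(k/m)))
        + D * ENNReal.ofReal (θ ^ n) := by rw [hEdef, hconst]

lemma ana_bound (V : ℕ → ℝ≥0∞) (k m C : ℝ) (hk : 0 < k) (hm : 0 < m) (hC : 0 < C)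
    (D : ℝ≥0∞) (hD : D ≠ ∞) (θ : ℝ) (hθ0 : 0 ≤ θ) (hθ1 : θ < 1)
    (hV : ∀ n : ℕ, 1 ≤ n →
      V n ≤ ENNReal.ofReal (C * (n:ℝ) ^ (-(k/m))) + D * ENNReal.ofReal (θ ^ n)) :
    (Filter.limsup (fun n : ℕ =>
        ((k * Real.log n / Real.log (1 / (V n).toReal) : ℝ) : EReal)) atTop ≤ ((m:ℝ) : EReal))
    ∧ Filter.limsup (fun n : ℕ => (n:ℝ≥0∞) ^ (k/m) * V n) atTop ≤ ENNReal.ofReal C := by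
  have hgeo : Tendsto (fun n : ℕ => (n:ℝ) ^ (k/m) * θ ^ n) atTop (𝓝 0) := by
    have hK : k/m ≤ (⌈k/m⌉₊ : ℝ) := Nat.le_ceil _
    have h1 : Tendsto (fun n : ℕ => (n:ℝ) ^ (⌈k/m⌉₊) * θ ^ n) atTop (𝓝 0) :=
      tendsto_pow_const_mul_const_pow_of_lt_one _ hθ0 hθ1
    refine squeeze_zero' ?_ ?_ h1
    · filter_upwards [eventually_ge_atTop 1] with n hn
      have : (0:ℝ) < n := by exact_mod_cast hn
      positivity
    · filter_upwards [eventually_ge_atTop 1] with n hn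
      have hn1 : (1:ℝ) ≤ n := by exact_mod_cast hn
      refine mul_le_mul_of_nonneg_right ?_ (pow_nonneg hθ0 n)
      have := Real.rpow_le_rpow_of_exponent_le hn1 hK
      rwa [Real.rpow_natCast] at this
  have hcast : ∀ n : ℕ, 1 ≤ n → ((n:ℝ≥0∞) ^ (k/m) = ENNReal.ofReal ((n:ℝ) ^ (k/m))) := by
    intro n hn
    have hn0 : (0:ℝ) < n := by exact_mod_cast hn
    rw [← ENNReal.ofReal_rpow_of_pos hn0, ENNReal.ofReal_natCast]
  have htend2 : Tendsto (fun n : ℕ => D * ENNReal.ofReal ((n:ℝ) ^ (k/m) * θ ^ n))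
      atTop (𝓝 0) := by
    have h1 : Tendsto (fun n : ℕ => ENNReal.ofReal ((n:ℝ) ^ (k/m) * θ ^ n)) atTop (𝓝 0) := by
      have := ENNReal.tendsto_ofReal (m := fun n : ℕ => (n:ℝ) ^ (k/m) * θ ^ n) hgeo
      simpa using this
    have h2 := ENNReal.Tendsto.const_mul h1 (Or.inr hD)
    simpa using h2
  have hmain : ∀ n : ℕ, 1 ≤ n → (n:ℝ≥0∞) ^ (k/m) * V n
      ≤ ENNReal.ofReal C + D * ENNReal.ofReal ((n:ℝ) ^ (k/m) * θ ^ n) := by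
    intro n hn
    have hn0 : (0:ℝ) < n := by exact_mod_cast hn
    calc (n:ℝ≥0∞) ^ (k/m) * V n
        ≤ (n:ℝ≥0∞) ^ (k/m) * (ENNReal.ofReal (C * (n:ℝ) ^ (-(k/m)))
            + D * ENNReal.ofReal (θ ^ n)) := mul_le_mul_right (hV n hn) _
      _ = (n:ℝ≥0∞) ^ (k/m) * ENNReal.ofReal (C * (n:ℝ) ^ (-(k/m)))
            + (n:ℝ≥0∞) ^ (k/m) * (D * ENNReal.ofReal (θ ^ n)) := mul_add _ _ _
      _ = ENNReal.ofReal C + D * ENNReal.ofReal ((n:ℝ) ^ (k/m) * θ ^ n) := by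
          rw [hcast n hn]
          congr 1
          · rw [← ENNReal.ofReal_mul (by positivity)]
            congr 1
            rw [Real.rpow_neg hn0.le]
            have hne : (n:ℝ) ^ (k/m) ≠ 0 := ne_of_gt (Real.rpow_pos_of_pos hn0 _)
            field_simp
          · rw [mul_left_comm, ← ENNReal.ofReal_mul (by positivity)]
  constructor
  · -- dimension bound
    set A : ℝ := C + 1 with hAdef
    have hA : 0 < A := by linarith
    have hev : ∀ᶠ n : ℕ in atTop, (V n).toReal ≤ A * (n:ℝ) ^ (-(k/m)) := by
      have hsm : ∀ᶠ n : ℕ in atTop, (n:ℝ) ^ (k/m) * θ ^ n * D.toReal ≤ 1 := by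
        have h0 : Tendsto (fun n : ℕ => (n:ℝ) ^ (k/m) * θ ^ n * D.toReal) atTop (𝓝 0) := by
          simpa using hgeo.mul_const D.toReal
        exact h0.eventually_le_const (by norm_num : (0:ℝ) < 1)
      filter_upwards [eventually_ge_atTop 1, hsm] with n hn hsm'
      have hn0 : (0:ℝ) < n := by exact_mod_cast hn
      have hrp : (0:ℝ) < (n:ℝ) ^ (k/m) := Real.rpow_pos_of_pos hn0 _
      have hD2 : D * ENNReal.ofReal (θ ^ n) ≤ ENNReal.ofReal ((n:ℝ) ^ (-(k/m))) := by
        rw [← ENNReal.ofReal_toReal hD, ← ENNReal.ofReal_mul ENNReal.toReal_nonneg]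
        apply ENNReal.ofReal_le_ofReal
        rw [Real.rpow_neg hn0.le, ← one_div, le_div_iff₀ hrp]
        nlinarith [pow_nonneg hθ0 n, ENNReal.toReal_nonneg (a := D)]
      have hVn : V n ≤ ENNReal.ofReal (A * (n:ℝ) ^ (-(k/m))) := by
        refine (hV n hn).trans ?_
        calc ENNReal.ofReal (C * (n:ℝ) ^ (-(k/m))) + D * ENNReal.ofReal (θ ^ n)
            ≤ ENNReal.ofReal (C * (n:ℝ) ^ (-(k/m))) + ENNReal.ofReal ((n:ℝ) ^ (-(k/m))) :=
              add_le_add_right hD2 _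
          _ = ENNReal.ofReal (A * (n:ℝ) ^ (-(k/m))) := by
              rw [← ENNReal.ofReal_add (by positivity) (by positivity)]
              congr 1
              ring
      exact ENNReal.toReal_le_of_le_ofReal (by positivity) hVn
    by_contra hcon
    push_neg at hcon
    obtain ⟨z, hz1, hz2⟩ := EReal.lt_iff_exists_real_btwn.mp hcon
    have hzm : m < z := by exact_mod_cast hz1
    have hz0 : 0 < z := lt_trans hm hzm
    have hcoef : 0 < z * (k/m) - k := by
      have h : z * (k/m) - k = k * (z - m) / m := by field_simp
      rw [h]
      exact div_pos (mul_pos hk (by linarith)) hm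
    have hlog : Tendsto (fun n : ℕ => Real.log n) atTop atTop :=
      Real.tendsto_log_atTop.comp tendsto_natCast_atTop_atTop
    have he3 : ∀ᶠ n : ℕ in atTop,
        (z * Real.log A) / (z * (k/m) - k) ≤ Real.log n :=
      hlog.eventually_ge_atTop _
    have he4 : ∀ᶠ n : ℕ in atTop, (1 + Real.log A) / (k/m) ≤ Real.log n :=
      hlog.eventually_ge_atTop _
    have hev2 : ∀ᶠ n : ℕ in atTop,
        ((k * Real.log n / Real.log (1 / (V n).toReal) : ℝ) : EReal) ≤ (z : EReal) := by
      filter_upwards [eventually_ge_atTop 1, hev, he3, he4] with n hn hv3 h3 h4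
      rw [EReal.coe_le_coe_iff]
      have hn0 : (0:ℝ) < n := by exact_mod_cast hn
      have hn1 : (1:ℝ) ≤ n := by exact_mod_cast hn
      have hlogn : 0 ≤ Real.log n := Real.log_nonneg hn1
      have hkm : 0 < k/m := div_pos hk hm
      have hL0 : 1 ≤ (k/m) * Real.log n - Real.log A := by
        rw [div_le_iff₀ hkm] at h4
        linarith
      set v : ℝ := (V n).toReal with hvdef
      rcases eq_or_lt_of_le (show (0:ℝ) ≤ v from ENNReal.toReal_nonneg) with hv0 | hv0
      · rw [← hv0, div_zero, Real.log_zero, div_zero]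
        linarith
      · have hlogv : Real.log v ≤ Real.log A + (-(k/m)) * Real.log n := by
          have h5 : Real.log v ≤ Real.log (A * (n:ℝ) ^ (-(k/m))) :=
            Real.log_le_log hv0 hv3
          rwa [Real.log_mul (ne_of_gt hA) (ne_of_gt (Real.rpow_pos_of_pos hn0 _)),
            Real.log_rpow hn0] at h5
        have hL : Real.log (1 / v) ≥ (k/m) * Real.log n - Real.log A := by
          rw [one_div, Real.log_inv]
          linarith
        have hLpos : 0 < Real.log (1 / v) := by linarith
        have hnum : k * Real.log n ≤ z * ((k/m) * Real.log n - Real.log A) := by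
          rw [div_le_iff₀ hcoef] at h3
          nlinarith
        calc k * Real.log n / Real.log (1 / v)
            ≤ k * Real.log n / ((k/m) * Real.log n - Real.log A) := by
              apply div_le_div_of_nonneg_left (by positivity) (by linarith) hL
          _ ≤ z := by
              rw [div_le_iff₀ (by linarith)]
              linarith
    have : Filter.limsup (fun n : ℕ =>
        ((k * Real.log n / Real.log (1 / (V n).toReal) : ℝ) : EReal)) atTop ≤ (z : EReal) :=
      Filter.limsup_le_of_le (by isBoundedDefault) hev2
    exact absurd (lt_of_lt_of_le hz2 this) (lt_irrefl _)
  · -- coefficient bound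
    refine ENNReal.le_of_forall_pos_le_add fun ε hε hfin => ?_
    have hev : ∀ᶠ n : ℕ in atTop, (n:ℝ≥0∞) ^ (k/m) * V n ≤ ENNReal.ofReal C + (ε : ℝ≥0∞) := by
      have hsm : ∀ᶠ n : ℕ in atTop,
          D * ENNReal.ofReal ((n:ℝ) ^ (k/m) * θ ^ n) ≤ (ε : ℝ≥0∞) := by
        refine htend2.eventually_le_const ?_
        exact_mod_cast hε
      filter_upwards [eventually_ge_atTop 1, hsm] with n hn hsm'
      exact (hmain n hn).trans (add_le_add_right hsm' _)
    exact Filter.limsup_le_of_le (by isBoundedDefault) hev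
end Aux

section Main
open Set Real Topology

/-- If `ν` is a probability measure on `Y` that is
`ρ^{1/k}`-superregular of dimension `m` with constants `b, δ₀`, and
`sup_{x,y} ρ(x,y)^{1/k} < ∞` whenever `δ₀ < ∞`, then for every random variable `X`:
(i) the upper `k`-th quantization dimension is at most `m`; and (ii) if the `k`-th
quantization dimension exists and equals `m`, then the upper `k`-th quantization
coefficient is at most `Γ(1+k/m)·b^{-k/m}`. -/
theorem quantization_dimension_coefficient_upper_bound
    {X Y : Type*} [MeasurableSpace X] [MeasurableSpace Y]
    (ν : Measure Y) [IsProbabilityMeasure ν]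
    (ρ : X → Y → ℝ≥0∞) (hρ : Measurable (Function.uncurry ρ))
    (k m b : ℝ) (δ₀ : ℝ≥0∞) (hk : 0 < k) (hm : 0 < m) (hb : 0 < b) (hδ₀ : 0 < δ₀)
    (hsup : ∀ x : X, ∀ t : ℝ, 0 < t → ENNReal.ofReal t < δ₀ →
      ENNReal.ofReal (b * t ^ m) ≤ ν {y | (ρ x y) ^ (1 / k) < ENNReal.ofReal t})
    (hβ : δ₀ < ∞ → (⨆ x : X, ⨆ y : Y, (ρ x y) ^ (1 / k)) < ∞)
    (μX : Measure X) [IsProbabilityMeasure μX] :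
    (Filter.limsup (fun n : ℕ => ((qRatio μX ρ k n : ℝ) : EReal)) atTop ≤ ((m : ℝ) : EReal)) ∧
    ((Filter.liminf (fun n : ℕ => ((qRatio μX ρ k n : ℝ) : EReal)) atTop = ((m : ℝ) : EReal)
        ∧ Filter.limsup (fun n : ℕ => ((qRatio μX ρ k n : ℝ) : EReal)) atTop
            = ((m : ℝ) : EReal)) →
      Filter.limsup (fun n : ℕ => (n : ℝ≥0∞) ^ (k / m) * quantErr μX ρ n) atTop ≤
        ENNReal.ofReal (Real.Gamma (1 + k / m) * b ^ (-(k / m)))) := by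
  obtain ⟨D, hD, θ, hθ0, hθ1, hkey⟩ := key_bound ν ρ hρ k m b δ₀ hk hm hb hδ₀ hsup hβ μX
  set C : ℝ := Real.Gamma (1 + k/m) * b ^ (-(k/m)) with hCdef
  have hC : 0 < C :=
    mul_pos (Real.Gamma_pos_of_pos (by positivity)) (Real.rpow_pos_of_pos hb _)
  have hV : ∀ n : ℕ, 1 ≤ n → quantErr μX ρ n ≤
      ENNReal.ofReal (C * (n:ℝ) ^ (-(k/m))) + D * ENNReal.ofReal (θ ^ n) := by
    intro n hn
    exact hkey n hn
  have hana := ana_bound (fun n => quantErr μX ρ n) k m C hk hm hC D hD θ hθ0 hθ1 hV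
  constructor
  · have h1 := hana.1
    simp only [qRatio]
    exact h1
  · intro _
    exact hana.2

end Main
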